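/- Let R be a ring and M a bimodule. If a ∈ R is von Neumann regular in R and (a,0) is left morphic in R ⋉ M, then a is unit regular in R (i.e., a = aua for some unit u of R). -/

import Mathlib

open TrivSqZeroExt

/-- An element `x` of a ring `S` is left morphic if there is `y` with
`ann_l(x) = Sy` and `ann_l(y) = Sx`. -/
def IsLeftMorphicElem {S : Type*} [Ring S] (x : S) : Prop :=
  ∃ y : S, ({z : S | z * x = 0} = {z : S | ∃ w, z = w * y}) ∧
    ({z : S | z * y = 0} = {z : S | ∃ w, z = w * x})

theorem ehrlich {S : Type*} [Ring S] (x : S) (hreg : ∃ v : S, x = x * v * x)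
    (hmor : IsLeftMorphicElem x) : ∃ u : Sˣ, x = x * u * x := by
  obtain ⟨v, hv⟩ := hreg
  obtain ⟨y, h1, h2⟩ := hmor
  have h1' : ∀ z : S, z * x = 0 ↔ ∃ w, z = w * y := fun z => Set.ext_iff.mp h1 z
  have h2' : ∀ z : S, z * y = 0 ↔ ∃ w, z = w * x := fun z => Set.ext_iff.mp h2 z
  have hyx : y * x = 0 := (h1' y).2 ⟨1, (one_mul y).symm⟩
  have hxy : x * y = 0 := (h2' x).2 ⟨1, (one_mul x).symm⟩
  have hv' : x * v * x = x := hv.symm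
  have hxv : x * (v * x) = x := by rw [← mul_assoc, hv']
  have hxvt : ∀ t : S, x * (v * (x * t)) = x * t := fun t => by
    rw [← mul_assoc, ← mul_assoc, hv']
  have hxyt : ∀ t : S, x * (y * t) = 0 := fun t => by rw [← mul_assoc, hxy, zero_mul]
  have hyxt : ∀ t : S, y * (x * t) = 0 := fun t => by rw [← mul_assoc, hyx, zero_mul]
  have hann : (1 - x * v) * x = 0 := by
    simp only [sub_mul, one_mul, mul_assoc, hxv, sub_self]
  obtain ⟨b, hb⟩ := (h1' (1 - x * v)).mp hann
  set b' := b * (1 - v * x) with hb'def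
  have hby : b' * y = 1 - x * v := by
    rw [hb'def]
    simp only [mul_assoc, mul_sub, sub_mul, mul_one, one_mul, hxy, hxyt, mul_zero, sub_zero]
    exact hb.symm
  have hbe : ∀ t : S, b' * (v * (x * t)) = 0 := by
    intro t
    rw [hb'def]
    simp only [mul_assoc, mul_sub, sub_mul, mul_one, one_mul, hxvt, mul_zero, sub_self]
  have hbyt : ∀ t : S, b' * (y * t) = t - x * (v * t) := fun t => by
    rw [← mul_assoc, hby, sub_mul, one_mul, mul_assoc]
  have hbe0 : b' * (v * x) = 0 := by
    rw [hb'def]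
    simp only [mul_assoc, mul_sub, sub_mul, mul_one, one_mul, hxv, hxvt, mul_zero, sub_self]
  have hyb : y * b' = 1 - v * x := by
    set z := y * b' - (1 - v * x) with hz
    have hzy : z * y = 0 := by
      rw [hz]
      simp only [sub_mul, one_mul, mul_assoc, hby, mul_sub, mul_one, hxyt, hyxt, hxy, hyx,
        mul_zero, sub_zero, sub_self]
    obtain ⟨w, hw⟩ := (h2' z).mp hzy
    have hze : z * (v * x) = z := by
      rw [hw, mul_assoc, hxv]
    have hz0 : z * (v * x) = 0 := by
      rw [hz]
      simp only [sub_mul, one_mul, mul_assoc, hbe, hbe0, mul_sub, mul_one, hxvt, hxv,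
        mul_zero, sub_zero, sub_self, zero_sub, neg_zero]
    have hz00 : z = 0 := by rw [← hze, hz0]
    exact sub_eq_zero.mp hz00
  have hybt : ∀ t : S, y * (b' * t) = t - v * (x * t) := fun t => by
    rw [← mul_assoc, hyb, sub_mul, one_mul, mul_assoc]
  have huw : (v * x * v + y) * (x + (1 - x * v) * b') = 1 := by
    simp only [add_mul, mul_add, sub_mul, mul_sub, one_mul, mul_one, mul_assoc, hxv, hxvt,
      hxyt, hyxt, hyx, hxy, hyb, hby, hbe, hbe0, hybt, hbyt, mul_zero, zero_mul, sub_zero, sub_self]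
    abel
  have hwu : (x + (1 - x * v) * b') * (v * x * v + y) = 1 := by
    simp only [add_mul, mul_add, sub_mul, mul_sub, one_mul, mul_one, mul_assoc, hxv, hxvt,
      hxyt, hyxt, hyx, hxy, hyb, hby, hbe, hbe0, hybt, hbyt, mul_zero, zero_mul, sub_zero, sub_self]
    abel
  refine ⟨⟨v * x * v + y, x + (1 - x * v) * b', huw, hwu⟩, ?_⟩
  show x = x * (v * x * v + y) * x
  simp only [mul_add, add_mul, mul_assoc, hxv, hxvt, hxyt, hxy, zero_mul, mul_zero, add_zero]

/-- If `a ∈ R` is von Neumann regular in `R` and `(a,0)` is left morphic in the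
trivial extension `R ⋉ M`, then `a` is unit regular in `R`. -/
theorem stmt7 {R M : Type*} [Ring R] [AddCommGroup M] [Module R M] [Module Rᵐᵒᵖ M]
    [SMulCommClass R Rᵐᵒᵖ M] (a : R) (hreg : ∃ x : R, a = a * x * a)
    (hmor : IsLeftMorphicElem (inl a : TrivSqZeroExt R M)) :
    ∃ u : Rˣ, a = a * u * a := by
  obtain ⟨x, hx⟩ := hreg
  have hreg' : ∃ v : TrivSqZeroExt R M, inl a = inl a * v * inl a :=
    ⟨inl x, by rw [← inl_mul, ← inl_mul, ← hx]⟩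
  obtain ⟨U, hU⟩ := ehrlich (inl a : TrivSqZeroExt R M) hreg' hmor
  let f : TrivSqZeroExt R M →* R :=
    { toFun := fst, map_one' := fst_one, map_mul' := fst_mul }
  refine ⟨Units.map f U, ?_⟩
  have := congrArg (fst : TrivSqZeroExt R M → R) hU
  simpa [f] using this
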